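/- Let A ∈ ℝ^{m×n}, b ∈ ℝ^m with Ax = b consistent, B ∈ ℝ^{n×n} symmetric positive definite, Q ∈ ℝ^{d×m}, P := I − (Q A B^{−1/2})† Q A B^{−1/2}, and x* the minimizer of ||x − x^0||_B over {x : Ax = b}, where x^0 satisfies QAx^0 = Qb. Let S be a random sketching matrix drawn from a finitely supported distribution D, with Z := P B^{−1/2} Aᵀ Sᵀ (S A B^{−1/2} P B^{−1/2} Aᵀ Sᵀ)† S A B^{−1/2} P, and assume the exactness condition null(E[Z]) = null(A B^{−1/2} P). Then the subspace-constrained sketch-and-project iterates {x^k}, generated with an independent fresh draw of S each iteration, satisfy E||x^k − x*||_B² ≤ (1 − λmin⁺(E[Z]))^k · ||x^0 − x*||_B², where λmin⁺(E[Z]) denotes the smallest nonzero eigenvalue of E[Z]. -/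

import Mathlib

open Matrix

/-- `Mp` is the Moore–Penrose pseudoinverse of `M` (the four Penrose conditions,
which characterize it uniquely). -/
def IsMoorePenrose {k l : Type*} [Fintype k] [Fintype l]
    (M : Matrix k l ℝ) (Mp : Matrix l k ℝ) : Prop :=
  M * Mp * M = M ∧ Mp * M * Mp = Mp ∧ (M * Mp)ᵀ = M * Mp ∧ (Mp * M)ᵀ = Mp * M

/-- The square root of a positive semidefinite matrix, as `Matrix.PosSemidef.sqrt` was
defined in the older Mathlib (removed since in favour of `CFC.sqrt`). -/
noncomputable def Matrix.PosSemidef.sqrt {n : Type*} [Fintype n] [DecidableEq n]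
    {A : Matrix n n ℝ} (hA : A.PosSemidef) : Matrix n n ℝ :=
  hA.1.eigenvectorUnitary.1 * diagonal ((↑) ∘ Real.sqrt ∘ hA.1.eigenvalues) *
    (star hA.1.eigenvectorUnitary : Matrix n n ℝ)

/-- The smallest nonzero eigenvalue of a square real matrix
(with junk value `sInf ∅ = 0` if every eigenvalue is zero). -/
noncomputable def lamMinPos {n : ℕ} (M : Matrix (Fin n) (Fin n) ℝ) : ℝ :=
  sInf {μ : ℝ | μ ≠ 0 ∧ ∃ v : Fin n → ℝ, v ≠ 0 ∧ M *ᵥ v = μ • v}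

/-- The trajectory of an iterative method: `traj step x0 k ω` is the `k`-th iterate
obtained from `x0` using the random draws `ω 0, …, ω (k-1)`. -/
def traj {V I : Type*} (step : I → V → V) (x0 : V) : (k : ℕ) → (Fin k → I) → V
  | 0, _ => x0
  | k + 1, ω => step (ω (Fin.last k)) (traj step x0 k (Fin.init ω))

lemma psd_sqrt_herm {n : Type*} [Fintype n] [DecidableEq n] {A : Matrix n n ℝ}
    (hA : A.PosSemidef) : hA.sqrt.IsHermitian := by
  unfold Matrix.PosSemidef.sqrt
  rw [star_eq_conjTranspose]
  exact isHermitian_mul_mul_conjTranspose _ (isHermitian_diagonal _)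

lemma psd_sqrt_mul_self {n : Type*} [Fintype n] [DecidableEq n] {A : Matrix n n ℝ}
    (hA : A.PosSemidef) : hA.sqrt * hA.sqrt = A := by
  have hU : (star hA.1.eigenvectorUnitary : Matrix n n ℝ) * hA.1.eigenvectorUnitary.1 = 1 :=
    Unitary.star_mul_self_of_mem hA.1.eigenvectorUnitary.2
  conv_rhs => rw [hA.1.spectral_theorem, Unitary.conjStarAlgAut_apply]
  unfold Matrix.PosSemidef.sqrt
  calc _ = hA.1.eigenvectorUnitary.1 * (diagonal ((↑) ∘ Real.sqrt ∘ hA.1.eigenvalues) *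
        ((star hA.1.eigenvectorUnitary : Matrix n n ℝ) * hA.1.eigenvectorUnitary.1) *
        diagonal ((↑) ∘ Real.sqrt ∘ hA.1.eigenvalues)) *
        (star hA.1.eigenvectorUnitary : Matrix n n ℝ) := by simp only [Matrix.mul_assoc]
    _ = _ := by
      rw [hU, Matrix.mul_one, diagonal_mul_diagonal]
      congr 3
      ext i
      simp [Real.mul_self_sqrt (hA.eigenvalues_nonneg i)]

lemma dot_sym {n : ℕ} {M : Matrix (Fin n) (Fin n) ℝ} (hM : Mᵀ = M) (a c : Fin n → ℝ) :
    a ⬝ᵥ (M *ᵥ c) = c ⬝ᵥ (M *ᵥ a) := by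
  rw [dotProduct_mulVec, dotProduct_comm, ← mulVec_transpose, hM]

lemma mp_unique {k l : Type*} [Fintype k] [Fintype l] {M : Matrix k l ℝ}
    {X Y : Matrix l k ℝ} (hX : IsMoorePenrose M X) (hY : IsMoorePenrose M Y) : X = Y := by
  obtain ⟨hX1, hX2, hX3, hX4⟩ := hX
  obtain ⟨hY1, hY2, hY3, hY4⟩ := hY
  have hMX : M * X = M * Y := by
    calc M * X = (M * X)ᵀ := hX3.symm
    _ = Xᵀ * Mᵀ := by rw [transpose_mul]
    _ = Xᵀ * (M * Y * M)ᵀ := by rw [hY1]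
    _ = Xᵀ * (Mᵀ * (M * Y)ᵀ) := by rw [transpose_mul]
    _ = (Xᵀ * Mᵀ) * (M * Y) := by rw [hY3, Matrix.mul_assoc]
    _ = (M * X)ᵀ * (M * Y) := by rw [transpose_mul]
    _ = M * X * M * Y := by rw [hX3]; simp only [Matrix.mul_assoc]
    _ = M * Y := by rw [hX1]
  have hXM : X * M = Y * M := by
    calc X * M = (X * M)ᵀ := hX4.symm
    _ = Mᵀ * Xᵀ := by rw [transpose_mul]
    _ = (M * Y * M)ᵀ * Xᵀ := by rw [hY1]
    _ = ((Y * M)ᵀ * Mᵀ) * Xᵀ := by rw [show (M * Y * M)ᵀ = (M * (Y * M))ᵀ by rw [Matrix.mul_assoc], transpose_mul]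
    _ = (Y * M) * (Mᵀ * Xᵀ) := by rw [hY4, Matrix.mul_assoc]
    _ = (Y * M) * (X * M)ᵀ := by rw [transpose_mul]
    _ = Y * (M * (X * M)) := by rw [hX4, Matrix.mul_assoc]
    _ = Y * M := by rw [← Matrix.mul_assoc M X M, hX1]
  calc X = X * M * X := hX2.symm
  _ = X * (M * Y) := by rw [Matrix.mul_assoc, hMX]
  _ = (Y * M) * Y := by rw [← Matrix.mul_assoc, hXM]
  _ = Y := hY2

lemma mp_transpose {k l : Type*} [Fintype k] [Fintype l] {M : Matrix k l ℝ}
    {X : Matrix l k ℝ} (hX : IsMoorePenrose M X) : IsMoorePenrose Mᵀ Xᵀ := by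
  obtain ⟨h1, h2, h3, h4⟩ := hX
  refine ⟨?_, ?_, ?_, ?_⟩
  · rw [← transpose_mul, ← transpose_mul, ← Matrix.mul_assoc, h1]
  · rw [← transpose_mul, ← transpose_mul, ← Matrix.mul_assoc, h2]
  · rw [← transpose_mul, transpose_transpose, h4]
  · rw [← transpose_mul, transpose_transpose, h3]

-- symmetric idempotent quadratic form facts
lemma proj_quad {n : ℕ} {Z : Matrix (Fin n) (Fin n) ℝ} (hs : Zᵀ = Z) (hi : Z * Z = Z)
    (v : Fin n → ℝ) : v ⬝ᵥ (Z *ᵥ v) = (Z *ᵥ v) ⬝ᵥ (Z *ᵥ v) := by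
  conv_lhs => rw [← hi]
  rw [← mulVec_mulVec, dotProduct_mulVec, ← mulVec_transpose, hs]

lemma proj_contract {n : ℕ} {Z : Matrix (Fin n) (Fin n) ℝ} (hs : Zᵀ = Z) (hi : Z * Z = Z)
    (v : Fin n → ℝ) : v ⬝ᵥ (Z *ᵥ v) ≤ v ⬝ᵥ v := by
  have h0 : 0 ≤ (v - Z *ᵥ v) ⬝ᵥ (v - Z *ᵥ v) :=
    Finset.sum_nonneg fun i _ => mul_self_nonneg _
  have hc : (Z *ᵥ v) ⬝ᵥ v = v ⬝ᵥ (Z *ᵥ v) := dotProduct_comm _ _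
  have hexp : (v - Z *ᵥ v) ⬝ᵥ (v - Z *ᵥ v) = v ⬝ᵥ v - v ⬝ᵥ (Z *ᵥ v) := by
    rw [sub_dotProduct, dotProduct_sub, dotProduct_sub, ← proj_quad hs hi, hc]
    ring
  linarith [h0, hexp]

lemma dotProduct_sum' {n N : ℕ} (v : Fin n → ℝ) (f : Fin N → Fin n → ℝ) :
    v ⬝ᵥ (∑ i, f i) = ∑ i, v ⬝ᵥ f i := by
  simp only [dotProduct, Finset.sum_apply, Finset.mul_sum]
  exact Finset.sum_comm

lemma sum_mulVec' {n N : ℕ} (M : Fin N → Matrix (Fin n) (Fin n) ℝ) (v : Fin n → ℝ) :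
    (∑ i, M i) *ᵥ v = ∑ i, M i *ᵥ v := by
  ext j
  simp only [Matrix.mulVec, dotProduct, Finset.sum_apply, Matrix.sum_apply, Finset.sum_mul]
  rw [Finset.sum_comm]


lemma quad_zero {c q : ℝ} (hq : 0 ≤ q) (h : ∀ t : ℝ, 0 ≤ 2*t*c + t^2*q) : c = 0 := by
  by_contra hc
  have hq1 : 0 < q + 1 := by linarith
  have h1 := h (-c / (q+1))
  have hc2 : 0 < c * c := mul_self_pos.2 hc
  have e : -c / (q+1) * (q+1) = -c := div_mul_cancel₀ _ hq1.ne'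
  nlinarith [sq_nonneg (c / (q+1)), mul_pos hc2 hq1, sq_nonneg c]

lemma dotProduct_self_nonneg' {n : ℕ} (v : Fin n → ℝ) : 0 ≤ v ⬝ᵥ v :=
  Finset.sum_nonneg fun i _ => mul_self_nonneg _

lemma mem_lam_nonneg {n : ℕ} {EZ : Matrix (Fin n) (Fin n) ℝ}
    (hpsd : ∀ v : Fin n → ℝ, 0 ≤ v ⬝ᵥ (EZ *ᵥ v)) {μ : ℝ}
    (hμ : μ ∈ {μ : ℝ | μ ≠ 0 ∧ ∃ v : Fin n → ℝ, v ≠ 0 ∧ EZ *ᵥ v = μ • v}) : 0 ≤ μ := by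
  obtain ⟨hne, v, hv0, hveq⟩ := hμ
  have hvv : 0 < v ⬝ᵥ v :=
    lt_of_le_of_ne (dotProduct_self_nonneg' v) (Ne.symm (mt dotProduct_self_eq_zero.mp hv0))
  have := hpsd v
  rw [hveq, dotProduct_smul, smul_eq_mul] at this
  rw [mul_comm] at this
  exact nonneg_of_mul_nonneg_right this hvv

lemma lam_bddBelow {n : ℕ} {EZ : Matrix (Fin n) (Fin n) ℝ}
    (hpsd : ∀ v : Fin n → ℝ, 0 ≤ v ⬝ᵥ (EZ *ᵥ v)) :
    BddBelow {μ : ℝ | μ ≠ 0 ∧ ∃ v : Fin n → ℝ, v ≠ 0 ∧ EZ *ᵥ v = μ • v} :=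
  ⟨0, fun _ hμ => mem_lam_nonneg hpsd hμ⟩

lemma lam_nonneg {n : ℕ} {EZ : Matrix (Fin n) (Fin n) ℝ}
    (hpsd : ∀ v : Fin n → ℝ, 0 ≤ v ⬝ᵥ (EZ *ᵥ v)) : 0 ≤ lamMinPos EZ :=
  Real.sInf_nonneg fun _ hμ => mem_lam_nonneg hpsd hμ

lemma lam_le_one {n : ℕ} {EZ : Matrix (Fin n) (Fin n) ℝ}
    (hpsd : ∀ v : Fin n → ℝ, 0 ≤ v ⬝ᵥ (EZ *ᵥ v))
    (hcontr : ∀ v : Fin n → ℝ, v ⬝ᵥ (EZ *ᵥ v) ≤ v ⬝ᵥ v) : lamMinPos EZ ≤ 1 := by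
  unfold lamMinPos
  rcases Set.eq_empty_or_nonempty {μ : ℝ | μ ≠ 0 ∧ ∃ v : Fin n → ℝ, v ≠ 0 ∧ EZ *ᵥ v = μ • v}
    with h | ⟨μ, hμ⟩
  · rw [h, Real.sInf_empty]; norm_num
  · refine le_trans (csInf_le (lam_bddBelow hpsd) hμ) ?_
    obtain ⟨hne, v, hv0, hveq⟩ := hμ
    have hvv : 0 < v ⬝ᵥ v :=
      lt_of_le_of_ne (dotProduct_self_nonneg' v) (Ne.symm (mt dotProduct_self_eq_zero.mp hv0))
    have := hcontr v
    rw [hveq, dotProduct_smul, smul_eq_mul] at this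
    nlinarith

lemma sum_dotProduct' {n N : ℕ} (f : Fin N → Fin n → ℝ) (v : Fin n → ℝ) :
    (∑ i, f i) ⬝ᵥ v = ∑ i, f i ⬝ᵥ v := by
  rw [dotProduct_comm, dotProduct_sum']
  exact Finset.sum_congr rfl fun i _ => dotProduct_comm _ _

lemma quad_lower {n : ℕ} {EZ : Matrix (Fin n) (Fin n) ℝ} (hsym : EZᵀ = EZ)
    (hpsd : ∀ v : Fin n → ℝ, 0 ≤ v ⬝ᵥ (EZ *ᵥ v))
    {y : Fin n → ℝ} (hy : ∀ v : Fin n → ℝ, EZ *ᵥ v = 0 → y ⬝ᵥ v = 0) :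
    lamMinPos EZ * (y ⬝ᵥ y) ≤ y ⬝ᵥ (EZ *ᵥ y) := by
  have hherm : EZ.IsHermitian := by
    rw [Matrix.IsHermitian, conjTranspose_eq_transpose_of_trivial, hsym]
  set bb := hherm.eigenvectorBasis with hbb
  set lam := hherm.eigenvalues with hlam
  set c : Fin n → ℝ := fun i => y ⬝ᵥ ⇑(bb i) with hc
  have hdecomp : (WithLp.toLp 2 y : EuclideanSpace ℝ (Fin n)) = ∑ i, c i • (bb i : EuclideanSpace ℝ (Fin n)) := by
    rw [← bb.sum_repr' (WithLp.toLp 2 y)]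
    congr 1
  have hdecomp' : y = ∑ i, c i • ⇑(bb i) := by
    have := congrArg (fun (z : EuclideanSpace ℝ (Fin n)) => (z : Fin n → ℝ)) hdecomp
    simpa using this
  have hyb : ∀ i, y ⬝ᵥ (EZ *ᵥ ⇑(bb i)) = lam i * c i := by
    intro i
    rw [hherm.mulVec_eigenvectorBasis, dotProduct_smul, smul_eq_mul]
  have hquad : y ⬝ᵥ (EZ *ᵥ y) = ∑ i, lam i * (c i * c i) := by
    nth_rewrite 1 [hdecomp']
    rw [sum_dotProduct']
    refine Finset.sum_congr rfl fun i _ => ?_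
    rw [smul_dotProduct, dot_sym hsym, hyb i, smul_eq_mul]
    ring
  have hnorm : y ⬝ᵥ y = ∑ i, c i * c i := by
    nth_rewrite 2 [hdecomp']
    rw [dotProduct_sum']
    refine Finset.sum_congr rfl fun i _ => ?_
    rw [dotProduct_smul, smul_eq_mul]
  rw [hquad, hnorm, Finset.mul_sum]
  refine Finset.sum_le_sum fun i _ => ?_
  rcases eq_or_ne (lam i) 0 with h0 | h0
  · have hzero : EZ *ᵥ ⇑(bb i) = 0 := by
      rw [hherm.mulVec_eigenvectorBasis, ← hlam, h0, zero_smul]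
    have : c i = 0 := hy _ hzero
    rw [h0, this]
    simp
  · have hbne : (⇑(bb i) : Fin n → ℝ) ≠ 0 := by
      intro hz
      apply bb.toBasis.ne_zero i
      rw [OrthonormalBasis.coe_toBasis]
      ext j
      exact congrFun hz j
    have hmem : lam i ∈ {μ : ℝ | μ ≠ 0 ∧ ∃ v : Fin n → ℝ, v ≠ 0 ∧ EZ *ᵥ v = μ • v} :=
      ⟨h0, ⇑(bb i), hbne, hherm.mulVec_eigenvectorBasis i⟩
    have hle : lamMinPos EZ ≤ lam i := csInf_le (lam_bddBelow hpsd) hmem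
    exact mul_le_mul_of_nonneg_right hle (mul_self_nonneg _)

/-- convergence of subspace-constrained sketch-and-project.
With a finitely supported distribution of sketching matrices (weights `w i` on
matrices `Smat i`), per-sketch projectors `Z i`, expected projector `EZ`, and the
exactness condition `null(EZ) = null(A B^{−1/2} P)`, the iterates satisfy
`E‖x^k − x*‖_B² ≤ (1 − λmin⁺(EZ))^k ‖x^0 − x*‖_B²`, where the expectation is the
weighted sum over all sequences of draws. -/
theorem stmt_6 {m n d l N : ℕ}
    (A : Matrix (Fin m) (Fin n) ℝ) (b : Fin m → ℝ)
    (hconsistent : ∃ x, A *ᵥ x = b)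
    (B : Matrix (Fin n) (Fin n) ℝ) (hB : B.PosDef)
    (Q : Matrix (Fin d) (Fin m) ℝ)
    (Bih : Matrix (Fin n) (Fin n) ℝ) (hBih : Bih = (hB.posSemidef.sqrt)⁻¹)
    (N1 : Matrix (Fin n) (Fin d) ℝ) (hN1 : IsMoorePenrose (Q * A * Bih) N1)
    (P : Matrix (Fin n) (Fin n) ℝ) (hP : P = 1 - N1 * (Q * A * Bih))
    -- the finitely supported distribution `D` of sketching matrices
    (w : Fin N → ℝ) (hw : ∀ i, 0 ≤ w i) (hw1 : ∑ i, w i = 1)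
    (Smat : Fin N → Matrix (Fin l) (Fin m) ℝ)
    -- `N2 i = (S_i A B^{-1/2} P B^{-1/2} Aᵀ S_iᵀ)†` and the projectors `Z i`
    (N2 : Fin N → Matrix (Fin l) (Fin l) ℝ)
    (hN2 : ∀ i, IsMoorePenrose (Smat i * A * Bih * P * Bih * Aᵀ * (Smat i)ᵀ) (N2 i))
    (Z : Fin N → Matrix (Fin n) (Fin n) ℝ)
    (hZ : ∀ i, Z i = P * Bih * Aᵀ * (Smat i)ᵀ * N2 i * (Smat i * A * Bih * P))
    -- the expected projector `EZ = E[Z]`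
    (EZ : Matrix (Fin n) (Fin n) ℝ) (hEZ : EZ = ∑ i, w i • Z i)
    -- exactness condition: `null(E[Z]) = null(A B^{-1/2} P)`
    (hexact : ∀ v : Fin n → ℝ, EZ *ᵥ v = 0 ↔ (A * Bih * P) *ᵥ v = 0)
    -- the initial iterate satisfies `Q A x0 = Q b`
    (x0 : Fin n → ℝ) (hx0 : (Q * A) *ᵥ x0 = Q *ᵥ b)
    -- `x*` is the minimizer of `‖x - x0‖_B` over `{x : Ax = b}`
    (xstar : Fin n → ℝ) (hxstar_sol : A *ᵥ xstar = b)
    (hxstar_min : ∀ y : Fin n → ℝ, A *ᵥ y = b →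
      (xstar - x0) ⬝ᵥ (B *ᵥ (xstar - x0)) ≤ (y - x0) ⬝ᵥ (B *ᵥ (y - x0)))
    -- one step of the method: given an iterate satisfying the subspace constraint and
    -- a sketch index `i`, `step i x` minimizes `‖· - x‖_B` subject to both constraints
    (step : Fin N → (Fin n → ℝ) → (Fin n → ℝ))
    (hstep : ∀ i x, (Q * A) *ᵥ x = Q *ᵥ b →
      (Smat i * A) *ᵥ step i x = Smat i *ᵥ b ∧
      (Q * A) *ᵥ step i x = Q *ᵥ b ∧
      ∀ y : Fin n → ℝ, (Smat i * A) *ᵥ y = Smat i *ᵥ b → (Q * A) *ᵥ y = Q *ᵥ b →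
        (step i x - x) ⬝ᵥ (B *ᵥ (step i x - x)) ≤ (y - x) ⬝ᵥ (B *ᵥ (y - x))) :
    ∀ k : ℕ,
      ∑ ω : Fin k → Fin N, (∏ i, w (ω i)) *
          ((traj step x0 k ω - xstar) ⬝ᵥ (B *ᵥ (traj step x0 k ω - xstar))) ≤
        (1 - lamMinPos EZ) ^ k * ((x0 - xstar) ⬝ᵥ (B *ᵥ (x0 - xstar))) := by
    -- square root facts
  have hBsym : Bᵀ = B := by
    have := hB.1
    rwa [Matrix.IsHermitian, conjTranspose_eq_transpose_of_trivial] at this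
  set Bh := hB.posSemidef.sqrt with hBh
  have hBhsym : Bhᵀ = Bh := by
    have := psd_sqrt_herm hB.posSemidef
    rwa [Matrix.IsHermitian, conjTranspose_eq_transpose_of_trivial] at this
  have hBh2 : Bh * Bh = B := psd_sqrt_mul_self hB.posSemidef
  have hdet : IsUnit Bh.det := by
    have hBdet : B.det ≠ 0 := hB.det_pos.ne'
    have hd2 : Bh.det * Bh.det = B.det := by rw [← det_mul, hBh2]
    exact isUnit_iff_ne_zero.2 fun h => hBdet (by rw [← hd2, h, mul_zero])
  have hBih1 : Bih * Bh = 1 := by rw [hBih]; exact nonsing_inv_mul _ hdet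
  have hBih2 : Bh * Bih = 1 := by rw [hBih]; exact mul_nonsing_inv _ hdet
  have hBihsym : Bihᵀ = Bih := by rw [hBih, transpose_nonsing_inv, hBhsym]
  have hBBih : B * Bih = Bh := by rw [← hBh2, Matrix.mul_assoc, hBih2, Matrix.mul_one]
  have hq_nonneg : ∀ a : Fin n → ℝ, 0 ≤ a ⬝ᵥ (B *ᵥ a) := by
    intro a
    have := hB.posSemidef.dotProduct_mulVec_nonneg a
    simpa using this
  have hBhB : (Bh *ᵥ ·) ∘ (Bh *ᵥ ·) = (B *ᵥ ·) := by
    funext v; simp [mulVec_mulVec, hBh2]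
  have hBhdot : ∀ a : Fin n → ℝ, (Bh *ᵥ a) ⬝ᵥ (Bh *ᵥ a) = a ⬝ᵥ (B *ᵥ a) := by
    intro a
    rw [dotProduct_mulVec, ← mulVec_transpose, mulVec_mulVec, hBhsym, hBh2, dotProduct_comm,
      dot_sym hBsym]
  -- P facts
  have hPsym : Pᵀ = P := by rw [hP, transpose_sub, transpose_one, hN1.2.2.2]
  have hPP : P * P = P := by
    have h2 := hN1.2.1
    have hXX : (N1 * (Q * A * Bih)) * (N1 * (Q * A * Bih)) = N1 * (Q * A * Bih) := by
      calc (N1 * (Q * A * Bih)) * (N1 * (Q * A * Bih))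
          = (N1 * (Q * A * Bih) * N1) * (Q * A * Bih) := by simp only [Matrix.mul_assoc]
        _ = N1 * (Q * A * Bih) := by rw [h2]
    rw [hP]
    simp only [Matrix.sub_mul, Matrix.mul_sub, Matrix.one_mul, Matrix.mul_one]
    rw [hXX]
    abel
  -- constraint helper: P fixes vectors killed by Q*A*Bih
  have hPfix : ∀ v : Fin n → ℝ, (Q * A * Bih) *ᵥ v = 0 → P *ᵥ v = v := by
    intro v hv
    rw [hP, sub_mulVec, one_mulVec, ← mulVec_mulVec, hv, mulVec_zero, sub_zero]
  -- per-sketch matrix facts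
  have hZfacts : ∀ i, ((Z i)ᵀ = Z i) ∧ (Z i * Z i = Z i) ∧
      (∀ v : Fin n → ℝ, (Q * A * Bih) *ᵥ v = 0 → (Smat i * A * Bih) *ᵥ v = 0 → Z i *ᵥ v = 0) := by
    intro i
    set Wi := Smat i * A * Bih * P with hWi
    have hWT : Wiᵀ = P * Bih * Aᵀ * (Smat i)ᵀ := by
      rw [hWi]
      simp only [transpose_mul, hPsym, hBihsym, Matrix.mul_assoc]
    have hZi : Z i = Wiᵀ * N2 i * Wi := by
      rw [hZ i, hWT, hWi]
    have hWWT : Wi * Wiᵀ = Smat i * A * Bih * P * Bih * Aᵀ * (Smat i)ᵀ := by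
      rw [hWT, hWi]
      have hmid : P * (P * (Bih * (Aᵀ * (Smat i)ᵀ))) = P * (Bih * (Aᵀ * (Smat i)ᵀ)) := by
        rw [← Matrix.mul_assoc P P, hPP]
      simp only [Matrix.mul_assoc]
      rw [hmid]
    have hmp := hN2 i
    rw [← hWWT] at hmp
    have hN2sym : (N2 i)ᵀ = N2 i := by
      have hmpT := mp_transpose hmp
      rw [transpose_mul, transpose_transpose] at hmpT
      exact mp_unique hmpT hmp
    have hZsym : (Z i)ᵀ = Z i := by
      rw [hZi]
      simp only [transpose_mul, transpose_transpose, hN2sym, hPsym, hBihsym, Matrix.mul_assoc]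
    have hZidem : Z i * Z i = Z i := by
      have h2 := hmp.2.1
      rw [hZi]
      calc Wiᵀ * N2 i * Wi * (Wiᵀ * N2 i * Wi)
          = Wiᵀ * ((N2 i * (Wi * Wiᵀ) * N2 i) * Wi) := by simp only [Matrix.mul_assoc]
        _ = Wiᵀ * N2 i * Wi := by rw [h2]; simp only [Matrix.mul_assoc]
    refine ⟨hZsym, hZidem, fun v hv1 hv2 => ?_⟩
    have hPv : P *ᵥ v = v := hPfix v hv1
    have hWv : Wi *ᵥ v = 0 := by
      rw [hWi, ← mulVec_mulVec, hPv, hv2]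
    rw [hZi, ← mulVec_mulVec, hWv, mulVec_zero]
  -- feasibility of xstar
  have hQAxstar : (Q * A) *ᵥ xstar = Q *ᵥ b := by rw [← mulVec_mulVec, hxstar_sol]
  have hSAxstar : ∀ i, (Smat i * A) *ᵥ xstar = Smat i *ᵥ b := fun i => by
    rw [← mulVec_mulVec, hxstar_sol]
  -- quadratic expansion
  have hquad_expand : ∀ (a z : Fin n → ℝ) (t : ℝ),
      (a + t • z) ⬝ᵥ (B *ᵥ (a + t • z)) =
        a ⬝ᵥ (B *ᵥ a) + 2*t*(a ⬝ᵥ (B *ᵥ z)) + t^2*(z ⬝ᵥ (B *ᵥ z)) := by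
    intro a z t
    rw [mulVec_add, mulVec_smul, add_dotProduct, smul_dotProduct, dotProduct_add,
      dotProduct_smul, dotProduct_add, dotProduct_smul, dot_sym hBsym z a]
    simp only [smul_eq_mul]
    ring
  -- orthogonality at xstar
  have horth0 : ∀ z : Fin n → ℝ, A *ᵥ z = 0 → (xstar - x0) ⬝ᵥ (B *ᵥ z) = 0 := by
    intro z hz
    apply quad_zero (hq_nonneg z)
    intro t
    have hfeas : A *ᵥ (xstar + t • z) = b := by
      rw [mulVec_add, mulVec_smul, hz, smul_zero, add_zero, hxstar_sol]
    have hcand := hxstar_min _ hfeas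
    have hre : xstar + t • z - x0 = (xstar - x0) + t • z := by abel
    rw [hre, hquad_expand] at hcand
    linarith
  -- Good invariant
  set Good : (Fin n → ℝ) → Prop := fun x =>
    (Q * A) *ᵥ x = Q *ᵥ b ∧
    ∀ v : Fin n → ℝ, P *ᵥ v = v → (A * Bih) *ᵥ v = 0 → (x - xstar) ⬝ᵥ (Bh *ᵥ v) = 0
    with hGood
  have hGood0 : Good x0 := by
    refine ⟨hx0, fun v hPv hAv => ?_⟩
    have hz : A *ᵥ (Bih *ᵥ v) = 0 := by rw [mulVec_mulVec]; exact hAv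
    have h := horth0 (Bih *ᵥ v) hz
    rw [mulVec_mulVec, hBBih] at h
    have hneg : x0 - xstar = -(xstar - x0) := by abel
    rw [hneg, neg_dotProduct, h, neg_zero]
  -- step orthogonality
  have hstep_orth : ∀ i x, (Q * A) *ᵥ x = Q *ᵥ b → ∀ z : Fin n → ℝ,
      (Smat i * A) *ᵥ z = 0 → (Q * A) *ᵥ z = 0 →
      (step i x - x) ⬝ᵥ (B *ᵥ z) = 0 := by
    intro i x hx z hz1 hz2
    obtain ⟨hf1, hf2, hmin⟩ := hstep i x hx
    apply quad_zero (hq_nonneg z)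
    intro t
    have hcand := hmin (step i x + t • z)
      (by rw [mulVec_add, mulVec_smul, hz1, smul_zero, add_zero, hf1])
      (by rw [mulVec_add, mulVec_smul, hz2, smul_zero, add_zero, hf2])
    have hre : step i x + t • z - x = (step i x - x) + t • z := by abel
    rw [hre, hquad_expand] at hcand
    linarith
  -- invariant preserved
  have hGoodStep : ∀ i x, Good x → Good (step i x) := by
    intro i x hx
    obtain ⟨hf1, hf2, _⟩ := hstep i x hx.1
    refine ⟨hf2, fun v hPv hAv => ?_⟩
    have h1 : (x - xstar) ⬝ᵥ (Bh *ᵥ v) = 0 := hx.2 v hPv hAv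
    have h2 : (step i x - x) ⬝ᵥ (Bh *ᵥ v) = 0 := by
      have hz1 : (Smat i * A) *ᵥ (Bih *ᵥ v) = 0 := by
        rw [mulVec_mulVec, Matrix.mul_assoc, ← mulVec_mulVec, hAv, mulVec_zero]
      have hz2 : (Q * A) *ᵥ (Bih *ᵥ v) = 0 := by
        rw [mulVec_mulVec, Matrix.mul_assoc, ← mulVec_mulVec, hAv, mulVec_zero]
      have h := hstep_orth i x hx.1 (Bih *ᵥ v) hz1 hz2
      rwa [mulVec_mulVec, hBBih] at h
    have hsplit : step i x - xstar = (step i x - x) + (x - xstar) := by abel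
    rw [hsplit, add_dotProduct, h1, h2, add_zero]
  -- the key one-step inequality
  have hkeyineq : ∀ i x, Good x →
      (step i x - xstar) ⬝ᵥ (B *ᵥ (step i x - xstar)) ≤
        (x - xstar) ⬝ᵥ (B *ᵥ (x - xstar)) -
          (Bh *ᵥ (x - xstar)) ⬝ᵥ (Z i *ᵥ (Bh *ᵥ (x - xstar))) := by
    intro i x hx
    obtain ⟨hZsym, hZidem, hZker⟩ := hZfacts i
    obtain ⟨hf1, hf2, hmin⟩ := hstep i x hx.1
    set xp := step i x with hxp
    have horthc : (xp - x) ⬝ᵥ (B *ᵥ (xstar - xp)) = 0 := by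
      apply hstep_orth i x hx.1
      · rw [mulVec_sub, hSAxstar, hf1, sub_self]
      · rw [mulVec_sub, hQAxstar, hf2, sub_self]
    have hcross : (xp - x) ⬝ᵥ (B *ᵥ (xp - xstar)) = 0 := by
      have hne : xp - xstar = -(xstar - xp) := by abel
      rw [hne, mulVec_neg, dotProduct_neg, horthc, neg_zero]
    have hcross2 : (xp - xstar) ⬝ᵥ (B *ᵥ (xp - x)) = 0 := by
      rw [dot_sym hBsym]; exact hcross
    have hpyth : (x - xstar) ⬝ᵥ (B *ᵥ (x - xstar)) =
        (xp - xstar) ⬝ᵥ (B *ᵥ (xp - xstar)) + (xp - x) ⬝ᵥ (B *ᵥ (xp - x)) := by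
      have hd : x - xstar = (xp - xstar) - (xp - x) := by abel
      rw [hd, mulVec_sub, sub_dotProduct, dotProduct_sub, dotProduct_sub, hcross, hcross2]
      ring
    set u := Bh *ᵥ (xp - x) with hu
    set y := Bh *ᵥ (x - xstar) with hy
    have hZyp : Z i *ᵥ (u + y) = 0 := by
      have huy : u + y = Bh *ᵥ (xp - xstar) := by
        rw [hu, hy, ← mulVec_add]
        congr 1
        abel
      rw [huy]
      apply hZker
      · rw [mulVec_mulVec, Matrix.mul_assoc, hBih1, Matrix.mul_one, mulVec_sub, hQAxstar,
          hf2, sub_self]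
      · rw [mulVec_mulVec, Matrix.mul_assoc (Smat i * A), hBih1, Matrix.mul_one,
          mulVec_sub, hSAxstar, hf1, sub_self]
    have hZy : Z i *ᵥ y = -(Z i *ᵥ u) := by
      rw [mulVec_add] at hZyp
      calc Z i *ᵥ y = (Z i *ᵥ u + Z i *ᵥ y) - Z i *ᵥ u := by abel
        _ = -(Z i *ᵥ u) := by rw [hZyp]; abel
    have hkey2 : y ⬝ᵥ (Z i *ᵥ y) ≤ (xp - x) ⬝ᵥ (B *ᵥ (xp - x)) := by
      have h1 : y ⬝ᵥ (Z i *ᵥ y) = (Z i *ᵥ y) ⬝ᵥ (Z i *ᵥ y) := proj_quad hZsym hZidem y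
      have h2 : (Z i *ᵥ y) ⬝ᵥ (Z i *ᵥ y) = (Z i *ᵥ u) ⬝ᵥ (Z i *ᵥ u) := by
        rw [hZy, neg_dotProduct, dotProduct_neg, neg_neg]
      have h3 : u ⬝ᵥ (Z i *ᵥ u) = (Z i *ᵥ u) ⬝ᵥ (Z i *ᵥ u) := proj_quad hZsym hZidem u
      have h4 : u ⬝ᵥ (Z i *ᵥ u) ≤ u ⬝ᵥ u := proj_contract hZsym hZidem u
      have h5 : u ⬝ᵥ u = (xp - x) ⬝ᵥ (B *ᵥ (xp - x)) := hBhdot _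
      linarith
    linarith [hpyth, hkey2]
  -- EZ facts
  have hEZsym : EZᵀ = EZ := by
    rw [hEZ, transpose_sum]
    exact Finset.sum_congr rfl fun i _ => by rw [transpose_smul, (hZfacts i).1]
  have hEZexp : ∀ v : Fin n → ℝ, v ⬝ᵥ (EZ *ᵥ v) = ∑ i, w i * (v ⬝ᵥ (Z i *ᵥ v)) := by
    intro v
    rw [hEZ, show (∑ i, w i • Z i) = ∑ i, (fun i => w i • Z i) i from rfl, sum_mulVec',
      dotProduct_sum']
    exact Finset.sum_congr rfl fun i _ => by
      rw [smul_mulVec, dotProduct_smul, smul_eq_mul]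
  have hEZpsd : ∀ v : Fin n → ℝ, 0 ≤ v ⬝ᵥ (EZ *ᵥ v) := by
    intro v
    rw [hEZexp]
    refine Finset.sum_nonneg fun i _ => mul_nonneg (hw i) ?_
    rw [proj_quad (hZfacts i).1 (hZfacts i).2.1]
    exact dotProduct_self_nonneg' _
  have hEZcontr : ∀ v : Fin n → ℝ, v ⬝ᵥ (EZ *ᵥ v) ≤ v ⬝ᵥ v := by
    intro v
    rw [hEZexp]
    calc ∑ i, w i * (v ⬝ᵥ (Z i *ᵥ v)) ≤ ∑ i, w i * (v ⬝ᵥ v) :=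
          Finset.sum_le_sum fun i _ =>
            mul_le_mul_of_nonneg_left (proj_contract (hZfacts i).1 (hZfacts i).2.1 v) (hw i)
      _ = v ⬝ᵥ v := by rw [← Finset.sum_mul, hw1, one_mul]
  have hlam0 : 0 ≤ lamMinPos EZ := lam_nonneg hEZpsd
  have hlam1 : lamMinPos EZ ≤ 1 := lam_le_one hEZpsd hEZcontr
  -- expectation one-step contraction
  have hexp_step : ∀ x, Good x →
      ∑ i, w i * ((step i x - xstar) ⬝ᵥ (B *ᵥ (step i x - xstar))) ≤
        (1 - lamMinPos EZ) * ((x - xstar) ⬝ᵥ (B *ᵥ (x - xstar))) := by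
    intro x hx
    set y := Bh *ᵥ (x - xstar) with hy
    have hPy : P *ᵥ y = y := by
      apply hPfix
      rw [hy, mulVec_mulVec, Matrix.mul_assoc, hBih1, Matrix.mul_one, mulVec_sub, hQAxstar,
        hx.1, sub_self]
    have hyperp : ∀ v : Fin n → ℝ, EZ *ᵥ v = 0 → y ⬝ᵥ v = 0 := by
      intro v hv
      have hker : (A * Bih * P) *ᵥ v = 0 := (hexact v).1 hv
      have hPv' : P *ᵥ (P *ᵥ v) = P *ᵥ v := by rw [mulVec_mulVec, hPP]
      have hAv' : (A * Bih) *ᵥ (P *ᵥ v) = 0 := by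
        rw [mulVec_mulVec]; exact hker
      have hJ : (x - xstar) ⬝ᵥ (Bh *ᵥ (P *ᵥ v)) = 0 := hx.2 (P *ᵥ v) hPv' hAv'
      calc y ⬝ᵥ v = (P *ᵥ y) ⬝ᵥ v := by rw [hPy]
        _ = v ⬝ᵥ (P *ᵥ y) := dotProduct_comm _ _
        _ = y ⬝ᵥ (P *ᵥ v) := dot_sym hPsym v y
        _ = (P *ᵥ v) ⬝ᵥ y := dotProduct_comm _ _
        _ = (x - xstar) ⬝ᵥ (Bh *ᵥ (P *ᵥ v)) := by
            rw [hy, dotProduct_mulVec, ← mulVec_transpose, hBhsym, dotProduct_comm]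
        _ = 0 := hJ
    have hspec := quad_lower hEZsym hEZpsd hyperp
    have hyy : y ⬝ᵥ y = (x - xstar) ⬝ᵥ (B *ᵥ (x - xstar)) := hBhdot _
    have hEZy : y ⬝ᵥ (EZ *ᵥ y) = ∑ i, w i * (y ⬝ᵥ (Z i *ᵥ y)) := hEZexp y
    calc ∑ i, w i * ((step i x - xstar) ⬝ᵥ (B *ᵥ (step i x - xstar)))
        ≤ ∑ i, w i * ((x - xstar) ⬝ᵥ (B *ᵥ (x - xstar)) - y ⬝ᵥ (Z i *ᵥ y)) :=
          Finset.sum_le_sum fun i _ =>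
            mul_le_mul_of_nonneg_left (hkeyineq i x hx) (hw i)
      _ = (x - xstar) ⬝ᵥ (B *ᵥ (x - xstar)) - y ⬝ᵥ (EZ *ᵥ y) := by
          simp only [mul_sub]
          rw [Finset.sum_sub_distrib, ← Finset.sum_mul, hw1, one_mul, hEZy]
      _ ≤ (1 - lamMinPos EZ) * ((x - xstar) ⬝ᵥ (B *ᵥ (x - xstar))) := by
          rw [← hyy]
          nlinarith [hspec]
  -- goodness along trajectories
  have hGoodTraj : ∀ k (ω : Fin k → Fin N), Good (traj step x0 k ω) := by
    intro k
    induction k with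
    | zero => intro ω; exact hGood0
    | succ k ih => intro ω; exact hGoodStep _ _ (ih (Fin.init ω))
  -- main induction
  intro k
  induction k with
  | zero =>
    simp [traj]
  | succ k ih =>
    have hq0 : 0 ≤ (x0 - xstar) ⬝ᵥ (B *ᵥ (x0 - xstar)) := hq_nonneg _
    set lam := lamMinPos EZ with hlamdef
    have h1m : 0 ≤ 1 - lam := by linarith
    set F : (Fin n → ℝ) → ℝ := fun v => (v - xstar) ⬝ᵥ (B *ᵥ (v - xstar)) with hF
    have hreindex : ∑ ω : Fin (k+1) → Fin N, (∏ i, w (ω i)) * F (traj step x0 (k+1) ω)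
        = ∑ p : (Fin k → Fin N) × Fin N,
            ((∏ i, w (p.1 i)) * w p.2) * F (step p.2 (traj step x0 k p.1)) := by
      apply Fintype.sum_equiv
        (⟨fun ω : Fin (k+1) → Fin N => (Fin.init ω, ω (Fin.last k)),
          fun p => Fin.snoc p.1 p.2,
          fun ω => by simp [Fin.snoc_init_self],
          fun p => by simp [Fin.init_snoc, Fin.snoc_last]⟩ :
          (Fin (k+1) → Fin N) ≃ ((Fin k → Fin N) × Fin N))
      intro ω
      simp only [Equiv.coe_fn_mk]
      congr 1
      rw [Fin.prod_univ_castSucc]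
      rfl
    calc ∑ ω : Fin (k+1) → Fin N, (∏ i, w (ω i)) * F (traj step x0 (k+1) ω)
        = ∑ ω : Fin k → Fin N, ∑ j, ((∏ i, w (ω i)) * w j) * F (step j (traj step x0 k ω)) := by
          rw [hreindex, Fintype.sum_prod_type]
      _ ≤ ∑ ω : Fin k → Fin N, (∏ i, w (ω i)) * ((1 - lam) * F (traj step x0 k ω)) := by
          refine Finset.sum_le_sum fun ω _ => ?_
          have hnn : 0 ≤ ∏ i, w (ω i) := Finset.prod_nonneg fun i _ => hw _
          calc ∑ j, ((∏ i, w (ω i)) * w j) * F (step j (traj step x0 k ω))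
              = (∏ i, w (ω i)) * ∑ j, w j * F (step j (traj step x0 k ω)) := by
                rw [Finset.mul_sum]
                exact Finset.sum_congr rfl fun j _ => by ring
            _ ≤ (∏ i, w (ω i)) * ((1 - lam) * F (traj step x0 k ω)) :=
                mul_le_mul_of_nonneg_left (hexp_step _ (hGoodTraj k ω)) hnn
      _ = (1 - lam) * ∑ ω : Fin k → Fin N, (∏ i, w (ω i)) * F (traj step x0 k ω) := by
          rw [Finset.mul_sum]
          exact Finset.sum_congr rfl fun ω _ => by ring
      _ ≤ (1 - lam) * ((1 - lam)^k * ((x0 - xstar) ⬝ᵥ (B *ᵥ (x0 - xstar)))) :=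
          mul_le_mul_of_nonneg_left ih h1m
      _ = (1 - lam)^(k+1) * ((x0 - xstar) ⬝ᵥ (B *ᵥ (x0 - xstar))) := by ring
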